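/- Let Z ≥ 2, let x₂ ≤ 0, and let u ∈ Δ_Z. Then Σ_{c=1}^Z L_EL(‖q_c − u‖₁) = (3Z − 2 − Z x₂) e^{x₂}; in particular this sum is a constant independent of u. -/
import Mathlib


open MeasureTheory Real Finset

/-- Negative fraction linear (NFL) loss with parameter `x1`. -/
noncomputable def LNFL (x1 x : ℝ) : ℝ := if x1 ≤ x then x / x1 ^ 2 - 1 / x1 else -(1 / x)

/-- Exponential linear (EL) loss with parameter `x2`. -/
noncomputable def LEL (x2 x : ℝ) : ℝ := if x2 ≤ x then Real.exp x2 * (x + 1 - x2) else Real.exp x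

/-- The one-hot vector `q_c` for class `c`. -/
def onehot {Z : ℕ} (c : Fin Z) : Fin Z → ℝ := fun z => if z = c then 1 else 0

/-- The ℓ1 norm on `ℝ^Z`. -/
noncomputable def l1norm {Z : ℕ} (v : Fin Z → ℝ) : ℝ := ∑ z, |v z|

/-- Membership in the probability simplex `Δ_Z`. -/
def inSimplex {Z : ℕ} (u : Fin Z → ℝ) : Prop := (∀ z, 0 ≤ u z) ∧ ∑ z, u z = 1

/-- The sum over all classes of the EL loss of the ℓ1 distance from a point of
the simplex to the one-hot vectors is the constant `(3Z - 2 - Z x₂) e^{x₂}`,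
independent of the point `u`. -/
theorem el_loss_sum_constant {Z : ℕ} (hZ : 2 ≤ Z) {x2 : ℝ} (hx2 : x2 ≤ 0)
    (u : Fin Z → ℝ) (hu : inSimplex u) :
    ∑ c, LEL x2 (l1norm (onehot c - u))
      = (3 * (Z : ℝ) - 2 - Z * x2) * Real.exp x2 := by
  obtain ⟨hpos, hsum⟩ := hu
  have huc : ∀ c, u c ≤ 1 := by
    intro c
    rw [← hsum]
    exact Finset.single_le_sum (fun i _ => hpos i) (Finset.mem_univ c)
  have hl1 : ∀ c : Fin Z, l1norm (onehot c - u) = 2 * (1 - u c) := by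
    intro c
    unfold l1norm onehot
    have : ∀ z : Fin Z, |(fun z => if z = c then (1:ℝ) else 0) z - u z|
        = (if z = c then 1 - 2 * u z else 0) + u z := by
      intro z
      by_cases h : z = c
      · subst h
        simp only [eq_self_iff_true, if_true]
        rw [abs_of_nonneg (by linarith [huc z])]
        ring
      · simp only [if_neg h]
        rw [abs_of_nonpos (by linarith [hpos z])]
        ring
    simp only [Pi.sub_apply]
    rw [Finset.sum_congr rfl (fun z _ => this z), Finset.sum_add_distrib,
      Finset.sum_ite_eq' Finset.univ c, if_pos (Finset.mem_univ c), hsum]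
    ring
  have hLEL : ∀ c : Fin Z, LEL x2 (l1norm (onehot c - u))
      = Real.exp x2 * (2 * (1 - u c) + 1 - x2) := by
    intro c
    rw [hl1, LEL, if_pos (by linarith [huc c, hx2])]
  rw [Finset.sum_congr rfl (fun c _ => hLEL c)]
  rw [← Finset.mul_sum]
  have : ∑ c : Fin Z, (2 * (1 - u c) + 1 - x2)
      = 2 * ((Z : ℝ) - ∑ c, u c) + Z * (1 - x2) := by
    rw [Finset.sum_sub_distrib, Finset.sum_add_distrib, ← Finset.mul_sum,
      Finset.sum_sub_distrib]
    simp [Finset.card_univ]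
    ring
  rw [this, hsum]
  ring
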